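/- Suppose the linearizing map Φ_F is a C¹ diffeomorphism of ℝ (so that, by Herman's theorem, the map H : t ↦ Trans(F_t) has a non-zero derivative at t = 0). Let p_n/q_n be the n-th continued fraction convergent of θ = Trans(F). Then ℓ_{p_n/q_n} = o(θ − p_n/q_n) as n → ∞; in particular ℓ_{p_n/q_n} = O(1/q_n²). -/

import Mathlib

open Filter Real Set Topology Asymptotics

noncomputable section

namespace HermanLen

section FourierPart
open Complex Submodule

lemma fourier_apply_add' {T : ℝ} (n : ℤ) (a b : AddCircle T) :
    fourier n (a + b) = fourier n a * fourier n b := by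
  simp only [fourier_apply, smul_add, AddCircle.toCircle_add, Circle.coe_mul]

lemma fourier_nsmul_orbit {T : ℝ} (n : ℤ) (x w : AddCircle T) (k : ℕ) :
    fourier n (x + k • w) = fourier n x * (fourier n w) ^ k := by
  induction k with
  | zero => simp
  | succ k ih =>
      rw [succ_nsmul, ← add_assoc, fourier_apply_add', ih, pow_succ, mul_assoc]

lemma norm_fourier {T : ℝ} (n : ℤ) (x : AddCircle T) : ‖fourier n x‖ = 1 := by
  simp [fourier_apply, Circle.norm_coe]

lemma birkhoff_span {θ : ℝ} (hirr : Irrational θ)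
    (f : C(AddCircle (1:ℝ), ℂ)) (hf : f ∈ span ℂ (Set.range (@fourier 1))) :
    ∃ c : ℂ, ∀ ε : ℝ, 0 < ε → ∃ Q : ℕ, ∀ q : ℕ, Q ≤ q → ∀ x : AddCircle (1:ℝ),
      ‖(∑ k ∈ Finset.range q, f (x + k • ((θ : AddCircle (1:ℝ))))) - (q : ℂ) * c‖
        ≤ (q : ℝ) * ε := by
  induction hf using Submodule.span_induction with
  | mem f hfmem =>
      obtain ⟨n, rfl⟩ := hfmem
      rcases eq_or_ne n 0 with rfl | hn
      · refine ⟨1, fun ε hε => ⟨0, fun q _ x => ?_⟩⟩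
        simp only [fourier_zero]
        simp [mul_one]
        positivity
      · refine ⟨0, fun ε hε => ?_⟩
        set z : ℂ := fourier n ((θ : AddCircle (1:ℝ))) with hz
        have hz1 : z ≠ 1 := by
          intro h
          have h2 : AddCircle.toCircle (n • ((θ : AddCircle (1:ℝ)))) = 1 := by
            rw [hz, fourier_apply] at h
            exact Subtype.ext (by simpa using h)
          have h3 : n • ((θ : AddCircle (1:ℝ))) = 0 := by
            apply AddCircle.injective_toCircle (one_ne_zero)
            rw [h2, AddCircle.toCircle_zero]
          rw [← QuotientAddGroup.mk_zsmul, AddCircle.coe_eq_zero_iff] at h3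
          obtain ⟨m, hm⟩ := h3
          apply hirr
          refine ⟨(m : ℚ) / (n : ℚ), ?_⟩
          have hm' : (m : ℝ) = (n : ℝ) * θ := by
            have := hm
            push_cast at this ⊢
            simpa [zsmul_eq_mul] using this
          have hn' : (n : ℝ) ≠ 0 := by exact_mod_cast hn
          push_cast
          field_simp
          linarith [hm']
        have hd : 0 < ‖z - 1‖ := by
          rw [norm_pos_iff]
          exact sub_ne_zero.mpr hz1
        refine ⟨⌈2 / (‖z - 1‖ * ε)⌉₊ + 1, fun q hq x => ?_⟩
        have hsum : (∑ k ∈ Finset.range q, fourier n (x + k • ((θ : AddCircle (1:ℝ)))))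
            = fourier n x * ∑ k ∈ Finset.range q, z ^ k := by
          rw [Finset.mul_sum]
          exact Finset.sum_congr rfl fun k _ => fourier_nsmul_orbit n x _ k
        have hgeom : ∑ k ∈ Finset.range q, z ^ k = (z ^ q - 1) / (z - 1) :=
          geom_sum_eq hz1 q
        have hnorm : ‖(∑ k ∈ Finset.range q, fourier n (x + k • ((θ : AddCircle (1:ℝ)))))
            - (q : ℂ) * 0‖ ≤ 2 / ‖z - 1‖ := by
          rw [mul_zero, sub_zero, hsum, norm_mul, norm_fourier, one_mul, hgeom, norm_div]
          gcongr
          calc ‖z ^ q - 1‖ ≤ ‖z ^ q‖ + 1 := by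
                simpa using norm_sub_le (z ^ q) 1
            _ ≤ 2 := by
                rw [norm_pow]
                have : ‖z‖ = 1 := norm_fourier n _
                rw [this]; norm_num
        refine hnorm.trans ?_
        have hq' : 2 / (‖z - 1‖ * ε) ≤ (q : ℝ) := by
          calc 2 / (‖z - 1‖ * ε) ≤ (⌈2 / (‖z - 1‖ * ε)⌉₊ : ℝ) := Nat.le_ceil _
            _ ≤ (q : ℝ) := by exact_mod_cast le_trans (Nat.le_succ _) hq
        rw [div_le_iff₀ (by positivity)] at hq'
        rw [div_le_iff₀ hd] at *
        nlinarith [hq']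
  | zero =>
      refine ⟨0, fun ε hε => ⟨0, fun q _ x => ?_⟩⟩
      simp
      exact mul_nonneg (Nat.cast_nonneg q) hε.le
  | add f g hfm hgm hfi hgi =>
      obtain ⟨c₁, h₁⟩ := hfi
      obtain ⟨c₂, h₂⟩ := hgi
      refine ⟨c₁ + c₂, fun ε hε => ?_⟩
      obtain ⟨Q₁, hQ₁⟩ := h₁ (ε / 2) (by positivity)
      obtain ⟨Q₂, hQ₂⟩ := h₂ (ε / 2) (by positivity)
      refine ⟨max Q₁ Q₂, fun q hq x => ?_⟩
      have e1 := hQ₁ q (le_trans (le_max_left _ _) hq) x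
      have e2 := hQ₂ q (le_trans (le_max_right _ _) hq) x
      have hsplit : (∑ k ∈ Finset.range q, (f + g) (x + k • ((θ : AddCircle (1:ℝ)))))
          - (q : ℂ) * (c₁ + c₂)
          = ((∑ k ∈ Finset.range q, f (x + k • ((θ : AddCircle (1:ℝ))))) - (q : ℂ) * c₁)
            + ((∑ k ∈ Finset.range q, g (x + k • ((θ : AddCircle (1:ℝ))))) - (q : ℂ) * c₂) := by
        simp only [ContinuousMap.add_apply, Finset.sum_add_distrib]
        ring
      rw [hsplit]
      calc ‖_ + _‖ ≤ _ + _ := norm_add_le _ _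
        _ ≤ (q : ℝ) * (ε / 2) + (q : ℝ) * (ε / 2) := by gcongr
        _ = (q : ℝ) * ε := by ring
  | smul a f hfm hfi =>
      obtain ⟨c₀, h₀⟩ := hfi
      rcases eq_or_ne a 0 with rfl | ha
      · refine ⟨0, fun ε hε => ⟨0, fun q _ x => ?_⟩⟩
        simp
        exact mul_nonneg (Nat.cast_nonneg q) hε.le
      · refine ⟨a * c₀, fun ε hε => ?_⟩
        obtain ⟨Q, hQ⟩ := h₀ (ε / ‖a‖) (div_pos hε (norm_pos_iff.mpr ha))
        refine ⟨Q, fun q hq x => ?_⟩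
        have e := hQ q hq x
        have hfact : (∑ k ∈ Finset.range q, (a • f) (x + k • ((θ : AddCircle (1:ℝ)))))
            - (q : ℂ) * (a * c₀)
            = a * ((∑ k ∈ Finset.range q, f (x + k • ((θ : AddCircle (1:ℝ))))) - (q : ℂ) * c₀) := by
          simp only [ContinuousMap.smul_apply, smul_eq_mul, ← Finset.mul_sum]
          ring
        rw [hfact, norm_mul]
        calc ‖a‖ * ‖_‖ ≤ ‖a‖ * ((q : ℝ) * (ε / ‖a‖)) := by gcongr
          _ = (q : ℝ) * ε := by
            field_simp


lemma equidistribution {θ : ℝ} (hirr : Irrational θ) (ψ : ℝ → ℝ)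
    (hcont : Continuous ψ) (hper : ∀ y, ψ (y + 1) = ψ y) :
    ∃ c : ℝ, ∀ ε : ℝ, 0 < ε → ∃ q : ℕ, 0 < q ∧ ∀ y : ℝ,
      |(∑ k ∈ Finset.range q, ψ (y + k * θ)) - q * c| ≤ q * ε := by
  have hperiodic : Function.Periodic (fun y : ℝ => (ψ y : ℂ)) 1 := fun y => by
    simp [hper y]
  -- the lift of ψ to the circle
  have hcont' : Continuous hperiodic.lift := by
    rw [continuous_coinduced_dom]
    exact continuous_ofReal.comp hcont
  set ψc : C(AddCircle (1:ℝ), ℂ) := ⟨hperiodic.lift, hcont'⟩ with hψc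
  have hψeval : ∀ y : ℝ, ψc ((y : AddCircle (1:ℝ))) = (ψ y : ℂ) := fun y => rfl
  -- density
  have hmem : ψc ∈ closure ((span ℂ (Set.range (@fourier 1)) : Submodule ℂ _) : Set _) := by
    have h1 : ψc ∈ ((span ℂ (Set.range (@fourier 1))).topologicalClosure : Set _) := by
      rw [span_fourier_closure_eq_top]
      trivial
    rwa [Submodule.topologicalClosure_coe] at h1
  have happrox : ∀ j : ℕ, ∃ g : C(AddCircle (1:ℝ), ℂ),
      g ∈ span ℂ (Set.range (@fourier 1)) ∧ dist ψc g < 1 / (j + 1) := by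
    intro j
    have := Metric.mem_closure_iff.mp hmem (1 / (j + 1)) (by positivity)
    obtain ⟨g, hg, hd⟩ := this
    exact ⟨g, hg, hd⟩
  choose g hgmem hgdist using happrox
  have hgc := fun j => birkhoff_span hirr (g j) (hgmem j)
  choose c hc using hgc
  have hclose : ∀ j (x : AddCircle (1:ℝ)), ‖ψc x - g j x‖ ≤ 1 / (j + 1) := by
    intro j x
    have := ContinuousMap.dist_apply_le_dist (f := ψc) (g := g j) x
    rw [dist_eq_norm] at this
    exact this.trans (hgdist j).le
  -- the c j are almost Cauchy
  have hcauchy : ∀ i j : ℕ, ‖c i - c j‖ ≤ 1 / (i + 1) + 1 / (j + 1) := by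
    intro i j
    refine le_of_forall_pos_le_add fun η hη => ?_
    obtain ⟨Qi, hQi⟩ := hc i (η / 2) (by positivity)
    obtain ⟨Qj, hQj⟩ := hc j (η / 2) (by positivity)
    set q : ℕ := max (max Qi Qj) 1 with hqdef
    have hq1 : 1 ≤ q := le_max_right _ _
    have hqpos : (0:ℝ) < q := by exact_mod_cast hq1
    have ei := hQi q (le_trans (le_max_left _ _) (le_max_left _ _)) 0
    have ej := hQj q (le_trans (le_max_right _ _) (le_max_left _ _)) 0
    have hmid : ‖(∑ k ∈ Finset.range q, g i ((0:AddCircle (1:ℝ)) + k • ((θ : AddCircle (1:ℝ)))))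
        - (∑ k ∈ Finset.range q, g j ((0:AddCircle (1:ℝ)) + k • ((θ : AddCircle (1:ℝ)))))‖
        ≤ (q : ℝ) * (1 / (i + 1) + 1 / (j + 1)) := by
      rw [← Finset.sum_sub_distrib]
      refine (norm_sum_le _ _).trans ?_
      have : ∀ k ∈ Finset.range q,
          ‖g i ((0:AddCircle (1:ℝ)) + k • ((θ : AddCircle (1:ℝ))))
            - g j ((0:AddCircle (1:ℝ)) + k • ((θ : AddCircle (1:ℝ))))‖
          ≤ 1 / (i + 1) + 1 / (j + 1) := by
        intro k _
        set w := (0:AddCircle (1:ℝ)) + k • ((θ : AddCircle (1:ℝ)))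
        calc ‖g i w - g j w‖ = ‖(g i w - ψc w) + (ψc w - g j w)‖ := by ring_nf
          _ ≤ ‖g i w - ψc w‖ + ‖ψc w - g j w‖ := norm_add_le _ _
          _ ≤ 1 / (i + 1) + 1 / (j + 1) := by
              have h1 := hclose i w
              have h2 := hclose j w
              rw [norm_sub_rev] at h1
              exact add_le_add h1 h2
      refine (Finset.sum_le_sum this).trans ?_
      rw [Finset.sum_const, Finset.card_range, nsmul_eq_mul]
    have key : (q : ℝ) * ‖c i - c j‖ ≤ (q : ℝ) * (1 / (i + 1) + 1 / (j + 1) + η) := by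
      set A := (∑ k ∈ Finset.range q, g i ((0:AddCircle (1:ℝ)) + k • ((θ : AddCircle (1:ℝ)))))
        - (q : ℂ) * c i with hA
      set B := (∑ k ∈ Finset.range q, g i ((0:AddCircle (1:ℝ)) + k • ((θ : AddCircle (1:ℝ)))))
        - (∑ k ∈ Finset.range q, g j ((0:AddCircle (1:ℝ)) + k • ((θ : AddCircle (1:ℝ))))) with hB
      set C := (∑ k ∈ Finset.range q, g j ((0:AddCircle (1:ℝ)) + k • ((θ : AddCircle (1:ℝ)))))
        - (q : ℂ) * c j with hC
      have hdecomp : (q : ℂ) * (c i - c j) = -A + B + C := by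
        rw [hA, hB, hC]; ring
      have hn3 : ‖(q : ℂ) * (c i - c j)‖ ≤ ‖-A + B + C‖ := by rw [hdecomp]
      have hn4 : ‖-A + B + C‖ ≤ ‖A‖ + ‖B‖ + ‖C‖ := by
        refine (norm_add₃_le).trans ?_
        rw [norm_neg]
      have hn5 : ‖(q : ℂ) * (c i - c j)‖ = (q : ℝ) * ‖c i - c j‖ := by
        rw [norm_mul]
        congr 1
        simp
      rw [hn5] at hn3
      have := hn3.trans (hn4.trans (by linarith [ei, ej, hmid] :
        ‖A‖ + ‖B‖ + ‖C‖ ≤ (q : ℝ) * (η / 2) + (q : ℝ) * (1 / (i + 1) + 1 / (j + 1)) + (q : ℝ) * (η / 2)))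
      linarith
    have := le_of_mul_le_mul_left key hqpos
    linarith
  -- c j is Cauchy, get limit
  have hCauchy : CauchySeq c := by
    refine cauchySeq_of_le_tendsto_0 (fun N : ℕ => 2 / ((N:ℝ) + 1)) (fun n m N hn hm => ?_) ?_
    · rw [dist_eq_norm]
      refine (hcauchy n m).trans ?_
      have h1 : 1 / ((n:ℝ) + 1) ≤ 1 / ((N:ℝ) + 1) := by gcongr
      have h2 : 1 / ((m:ℝ) + 1) ≤ 1 / ((N:ℝ) + 1) := by gcongr
      show 1 / ((n:ℝ) + 1) + 1 / ((m:ℝ) + 1) ≤ 2 / ((N:ℝ) + 1)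
      have h3 : 2 / ((N:ℝ) + 1) = 1 / ((N:ℝ) + 1) + 1 / ((N:ℝ) + 1) := by ring
      rw [h3]
      exact add_le_add h1 h2
    · have h4 : Tendsto (fun N : ℕ => 2 * (1 / ((N:ℝ) + 1))) atTop (𝓝 (2 * 0)) :=
        tendsto_one_div_add_atTop_nhds_zero_nat.const_mul 2
      simp only [mul_zero] at h4
      refine h4.congr fun N => ?_
      ring
  obtain ⟨climit, hclimit⟩ := cauchySeq_tendsto_of_complete hCauchy
  have hlim : ∀ j : ℕ, ‖c j - climit‖ ≤ 1 / (j + 1) := by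
    intro j
    have h1 : Tendsto (fun i => ‖c j - c i‖) atTop (𝓝 ‖c j - climit‖) :=
      (tendsto_const_nhds.sub hclimit).norm
    have h2 : Tendsto (fun i : ℕ => 1 / ((j:ℝ) + 1) + 1 / ((i:ℝ) + 1)) atTop
        (𝓝 (1 / ((j:ℝ) + 1) + 0)) := by
      exact tendsto_const_nhds.add tendsto_one_div_add_atTop_nhds_zero_nat
    have := le_of_tendsto_of_tendsto' h1 h2 (fun i => by
      have := hcauchy j i
      exact this)
    simpa using this
  refine ⟨climit.re, fun ε hε => ?_⟩
  obtain ⟨j, hj⟩ : ∃ j : ℕ, 1 / ((j:ℝ) + 1) < ε / 4 := by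
    obtain ⟨j, hj⟩ := exists_nat_one_div_lt (show (0:ℝ) < ε / 4 by positivity)
    exact ⟨j, hj⟩
  obtain ⟨Q, hQ⟩ := hc j (ε / 4) (by positivity)
  refine ⟨max Q 1, lt_of_lt_of_le Nat.one_pos (le_max_right _ _), fun y => ?_⟩
  set q : ℕ := max Q 1
  have e := hQ q (le_max_left _ _) ((y : AddCircle (1:ℝ)))
  -- rewrite the sum over the circle as a real sum
  have hcoe : ∀ k : ℕ, ((y : AddCircle (1:ℝ)) + k • ((θ : AddCircle (1:ℝ))))
      = (((y + k * θ : ℝ)) : AddCircle (1:ℝ)) := by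
    intro k
    rw [← QuotientAddGroup.mk_nsmul, nsmul_eq_mul, ← QuotientAddGroup.mk_add]
  have hsumeq : (∑ k ∈ Finset.range q, ψc ((y : AddCircle (1:ℝ)) + k • ((θ : AddCircle (1:ℝ)))))
      = ((∑ k ∈ Finset.range q, ψ (y + k * θ) : ℝ) : ℂ) := by
    push_cast
    refine Finset.sum_congr rfl fun k _ => ?_
    rw [hcoe k, hψeval]
  have hsumg : ‖((∑ k ∈ Finset.range q, ψ (y + k * θ) : ℝ) : ℂ) - (q : ℂ) * climit‖
      ≤ (q : ℝ) * ε := by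
    have hdecomp : ((∑ k ∈ Finset.range q, ψ (y + k * θ) : ℝ) : ℂ) - (q : ℂ) * climit
        = ((∑ k ∈ Finset.range q, ψc ((y : AddCircle (1:ℝ)) + k • ((θ : AddCircle (1:ℝ)))))
            - (∑ k ∈ Finset.range q, g j ((y : AddCircle (1:ℝ)) + k • ((θ : AddCircle (1:ℝ))))))
          + ((∑ k ∈ Finset.range q, g j ((y : AddCircle (1:ℝ)) + k • ((θ : AddCircle (1:ℝ)))))
            - (q : ℂ) * c j)
          + (q : ℂ) * (c j - climit) := by
      rw [← hsumeq]; ring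
    rw [hdecomp]
    have h1 : ‖(∑ k ∈ Finset.range q, ψc ((y : AddCircle (1:ℝ)) + k • ((θ : AddCircle (1:ℝ)))))
        - (∑ k ∈ Finset.range q, g j ((y : AddCircle (1:ℝ)) + k • ((θ : AddCircle (1:ℝ)))))‖
        ≤ (q : ℝ) * (1 / (j + 1)) := by
      rw [← Finset.sum_sub_distrib]
      refine (norm_sum_le _ _).trans ?_
      refine (Finset.sum_le_sum (fun k _ => hclose j _)).trans ?_
      rw [Finset.sum_const, Finset.card_range, nsmul_eq_mul]
    have h3 : ‖(q : ℂ) * (c j - climit)‖ ≤ (q : ℝ) * (1 / (j + 1)) := by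
      rw [norm_mul]
      have hqn : ‖(q : ℂ)‖ = (q : ℝ) := by simp
      rw [hqn]
      exact mul_le_mul_of_nonneg_left (hlim j) (Nat.cast_nonneg q)
    refine (norm_add₃_le).trans ?_
    have hq0 : (0:ℝ) ≤ (q : ℝ) := Nat.cast_nonneg q
    have := mul_le_mul_of_nonneg_left hj.le hq0
    nlinarith [h1, e, h3]
  -- take real parts
  have habs : |(∑ k ∈ Finset.range q, ψ (y + k * θ)) - (q : ℝ) * climit.re|
      ≤ ‖((∑ k ∈ Finset.range q, ψ (y + k * θ) : ℝ) : ℂ) - (q : ℂ) * climit‖ := by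
    have : (∑ k ∈ Finset.range q, ψ (y + k * θ)) - (q : ℝ) * climit.re
        = (((∑ k ∈ Finset.range q, ψ (y + k * θ) : ℝ) : ℂ) - (q : ℂ) * climit).re := by
      simp [Complex.sub_re, Complex.mul_re]
    rw [this]
    exact Complex.abs_re_le_norm _
  exact habs.trans hsumg

end FourierPart

lemma periodic_int_shift {f : ℝ → ℝ} (hp : ∀ x, f (x + 1) = f x) (x : ℝ) (n : ℤ) :
    f (x + n) = f x := by
  have hper : Function.Periodic f 1 := hp
  have := (hper.zsmul n) x
  simpa using this

lemma deriv_periodic_of_periodic_shift {Φ : ℝ → ℝ} (hdiff : Differentiable ℝ Φ)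
    (hper : ∀ x, Φ (x + 1) = Φ x + 1) (x : ℝ) : deriv Φ (x + 1) = deriv Φ x := by
  have h1 : HasDerivAt (fun y => Φ (y + 1)) (deriv Φ (x + 1)) x := by
    simpa using (hdiff (x + 1)).hasDerivAt.comp_add_const x 1
  have h2 : HasDerivAt (fun y => Φ (y + 1)) (deriv Φ x) x := by
    have : (fun y => Φ (y + 1)) = fun y => Φ y + 1 := funext hper
    rw [this]
    exact (hdiff x).hasDerivAt.add_const 1
  exact h1.unique h2

lemma deriv_bounds {Φ : ℝ → ℝ} (hΦmono : StrictMono Φ) (hper : ∀ x, Φ (x + 1) = Φ x + 1)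
    (hΦC1 : ContDiff ℝ 1 Φ) (hΦderiv : ∀ x, deriv Φ x ≠ 0) :
    ∃ m0 M0 : ℝ, 0 < m0 ∧ m0 ≤ M0 ∧ (∀ x, m0 ≤ deriv Φ x) ∧ (∀ x, deriv Φ x ≤ M0) := by
  have hdiff : Differentiable ℝ Φ := hΦC1.differentiable one_ne_zero
  have hcont : Continuous (deriv Φ) := hΦC1.continuous_deriv le_rfl
  have hpos : ∀ x, 0 < deriv Φ x := by
    intro x
    have h0 : 0 ≤ deriv Φ x := by
      have hd := (hdiff x).hasDerivAt
      rw [hasDerivAt_iff_tendsto_slope] at hd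
      refine ge_of_tendsto hd ?_
      filter_upwards [self_mem_nhdsWithin] with y hy
      have hy' : y ≠ x := hy
      rcases lt_or_gt_of_ne hy' with h | h
      · have h1 : Φ y ≤ Φ x := hΦmono.monotone h.le
        have h2 : y - x < 0 := by linarith
        rw [slope_def_field]
        exact div_nonneg_iff.mpr (Or.inr ⟨by linarith, h2.le⟩)
      · have h1 : Φ x ≤ Φ y := hΦmono.monotone h.le
        have h2 : 0 < y - x := by linarith
        rw [slope_def_field]
        exact div_nonneg (by linarith) h2.le
    exact lt_of_le_of_ne h0 (Ne.symm (hΦderiv x))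
  have hperiodic : ∀ (x : ℝ) (n : ℤ), deriv Φ (x + n) = deriv Φ x := by
    intro x n
    exact periodic_int_shift (fun y => deriv_periodic_of_periodic_shift hdiff hper y) x n
  obtain ⟨x0, hx0, hmin⟩ := isCompact_Icc.exists_isMinOn (α := ℝ)
    (s := Icc (0:ℝ) 1) ⟨0, by norm_num⟩ hcont.continuousOn
  obtain ⟨x1, hx1, hmax⟩ := isCompact_Icc.exists_isMaxOn (α := ℝ)
    (s := Icc (0:ℝ) 1) ⟨0, by norm_num⟩ hcont.continuousOn
  refine ⟨deriv Φ x0, deriv Φ x1, hpos x0, ?_, ?_, ?_⟩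
  · exact le_trans (hmin hx1) (le_refl _)
  · intro x
    have hfr : deriv Φ x = deriv Φ (Int.fract x) := by
      have heq : Int.fract x + (⌊x⌋ : ℤ) = x := by
        rw [Int.fract]; push_cast; ring
      conv_lhs => rw [← heq]
      rw [hperiodic]
    rw [hfr]
    exact hmin ⟨Int.fract_nonneg x, (Int.fract_lt_one x).le⟩
  · intro x
    have hfr : deriv Φ x = deriv Φ (Int.fract x) := by
      have heq : Int.fract x + (⌊x⌋ : ℤ) = x := by
        rw [Int.fract]; push_cast; ring
      conv_lhs => rw [← heq]
      rw [hperiodic]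
    rw [hfr]
    exact hmax ⟨Int.fract_nonneg x, (Int.fract_lt_one x).le⟩

lemma mvt_bounds {Φ : ℝ → ℝ} (hdiff : Differentiable ℝ Φ) {m0 M0 : ℝ}
    (hm : ∀ x, m0 ≤ deriv Φ x) (hM : ∀ x, deriv Φ x ≤ M0) :
    ∀ a b : ℝ, a ≤ b → m0 * (b - a) ≤ Φ b - Φ a ∧ Φ b - Φ a ≤ M0 * (b - a) := by
  have h1 : Monotone (fun x => Φ x - m0 * x) := by
    apply monotone_of_deriv_nonneg
    · exact hdiff.sub ((differentiable_id.const_mul m0))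
    · intro x
      have hd : HasDerivAt (fun x => Φ x - m0 * x) (deriv Φ x - m0) x := by
        have hg : HasDerivAt (fun x : ℝ => m0 * x) m0 x := by
          simpa using (hasDerivAt_id x).const_mul m0
        exact (hdiff x).hasDerivAt.sub hg
      rw [hd.deriv]
      linarith [hm x]
  have h2 : Monotone (fun x => M0 * x - Φ x) := by
    apply monotone_of_deriv_nonneg
    · exact (differentiable_id.const_mul M0).sub hdiff
    · intro x
      have hd : HasDerivAt (fun x => M0 * x - Φ x) (M0 - deriv Φ x) x := by
        have hg : HasDerivAt (fun x : ℝ => M0 * x) M0 x := by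
          simpa using (hasDerivAt_id x).const_mul M0
        exact hg.sub (hdiff x).hasDerivAt
      rw [hd.deriv]
      linarith [hM x]
  intro a b hab
  constructor
  · have := h1 hab
    simp only at this
    linarith
  · have := h2 hab
    simp only at this
    linarith

lemma unifcont_of_periodic {f : ℝ → ℝ} (hc : Continuous f) (hp : ∀ x, f (x + 1) = f x) :
    ∀ ε : ℝ, 0 < ε → ∃ δ : ℝ, 0 < δ ∧ ∀ u v : ℝ, |u - v| ≤ δ → |f u - f v| ≤ ε := by
  intro ε hε
  have huc : UniformContinuousOn f (Icc (-1 : ℝ) 2) :=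
    isCompact_Icc.uniformContinuousOn_of_continuous hc.continuousOn
  rw [Metric.uniformContinuousOn_iff] at huc
  obtain ⟨δ', hδ', H⟩ := huc ε hε
  refine ⟨min (δ' / 2) 1, by positivity, fun u v huv => ?_⟩
  set n : ℤ := ⌊u⌋
  have hfr : u - (n:ℝ) = Int.fract u := Int.self_sub_floor u
  have hu0 : (0:ℝ) ≤ u - n := by rw [hfr]; exact Int.fract_nonneg u
  have hu1 : u - (n:ℝ) < 1 := by rw [hfr]; exact Int.fract_lt_one u
  have hu' : u - n ∈ Icc (-1 : ℝ) 2 := ⟨by linarith, by linarith⟩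
  have hv' : v - n ∈ Icc (-1 : ℝ) 2 := by
    have h2 : |u - v| ≤ 1 := huv.trans (min_le_right _ _)
    obtain ⟨ha, hb⟩ := abs_le.mp h2
    exact ⟨by linarith, by linarith⟩
  have hfu : f (u - n) = f u := by
    have := periodic_int_shift hp (u - n) n
    simpa using this.symm
  have hfv : f (v - n) = f v := by
    have := periodic_int_shift hp (v - n) n
    simpa using this.symm
  have hdist : dist (u - n) (v - n) < δ' := by
    rw [Real.dist_eq]
    have : u - n - (v - n) = u - v := by ring
    rw [this]
    calc |u - v| ≤ min (δ' / 2) 1 := huv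
      _ ≤ δ' / 2 := min_le_left _ _
      _ < δ' := by linarith
  have := H _ hu' _ hv' hdist
  rw [Real.dist_eq, hfu, hfv] at this
  exact this.le

lemma inverse_props {Φ : ℝ → ℝ} (hmono : StrictMono Φ) (hbij : Function.Bijective Φ)
    (hper : ∀ x, Φ (x + 1) = Φ x + 1) :
    ∃ Ψ : ℝ → ℝ, Continuous Ψ ∧ Monotone Ψ ∧ (∀ x, Ψ (Φ x) = x) ∧ (∀ y, Φ (Ψ y) = y)
      ∧ (∀ y, Ψ (y + 1) = Ψ y + 1) := by
  set e := StrictMono.orderIsoOfSurjective Φ hmono hbij.2 with he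
  have hecoe : ∀ x, e x = Φ x := fun x => rfl
  refine ⟨fun y => e.symm y, ?_, ?_, ?_, ?_, ?_⟩
  · exact (OrderIso.continuous e.symm)
  · exact e.symm.monotone
  · intro x
    have : e.symm (e x) = x := e.symm_apply_apply x
    rwa [hecoe] at this
  · intro y
    have : e (e.symm y) = y := e.apply_symm_apply y
    rwa [hecoe] at this
  · intro y
    apply hbij.1
    have h1 : Φ (e.symm (y + 1)) = y + 1 := by
      have : e (e.symm (y + 1)) = y + 1 := e.apply_symm_apply _
      rwa [hecoe] at this
    have h2 : Φ (e.symm y + 1) = y + 1 := by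
      rw [hper]
      have : e (e.symm y) = y := e.apply_symm_apply _
      rw [hecoe] at this
      rw [this]
    rw [h1, h2]

lemma key_dyn (F : ℝ → ℝ) (hFmono : StrictMono F) (hFper : ∀ x, F (x + 1) = F x + 1)
    (T : ℝ → ℝ)
    (hT : ∀ t x : ℝ, Tendsto (fun n : ℕ => ((fun y => F y + t)^[n] x - x) / n)
      atTop (𝓝 (T t)))
    (θ : ℝ) (hirr : Irrational θ)
    (Φ : ℝ → ℝ) (hΦmono : StrictMono Φ) (hΦper : ∀ x, Φ (x + 1) = Φ x + 1)
    (hΦconj : ∀ x, Φ (F x) = Φ x + θ) (hΦC1 : ContDiff ℝ 1 Φ)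
    (hΦbij : Function.Bijective Φ) (hΦderiv : ∀ x, deriv Φ x ≠ 0) :
    ∃ m0 : ℝ, 0 < m0 ∧ (∀ t : ℝ, m0 * |t| ≤ |T t - θ|) ∧
      ∀ ε : ℝ, 0 < ε → ∃ c : ℝ, m0 ≤ c ∧ ∃ δ : ℝ, 0 < δ ∧
        ∀ t : ℝ, |t| ≤ δ → |T t - θ - c * t| ≤ ε * |t| := by
  obtain ⟨Ψ, hΨcont, hΨmono, hΨΦ, hΦΨ, hΨper⟩ := inverse_props hΦmono hΦbij hΦper
  obtain ⟨m0, M0, hm0pos, hmM, hm, hM⟩ := deriv_bounds hΦmono hΦper hΦC1 hΦderiv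
  have hdiff : Differentiable ℝ Φ := hΦC1.differentiable one_ne_zero
  have hMpos : 0 < M0 := lt_of_lt_of_le hm0pos hmM
  have hmvt := mvt_bounds hdiff hm hM
  have hcontd : Continuous (deriv Φ) := hΦC1.continuous_deriv le_rfl
  have hperd : ∀ x, deriv Φ (x + 1) = deriv Φ x :=
    deriv_periodic_of_periodic_shift hdiff hΦper
  -- increments of Φ
  have hincr : ∀ u t : ℝ, 0 ≤ t → m0 * t ≤ Φ (u + t) - Φ u ∧ Φ (u + t) - Φ u ≤ M0 * t := by
    intro u t ht
    have h := hmvt u (u + t) (by linarith)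
    rw [add_sub_cancel_left] at h
    exact h
  have hdecr : ∀ u t : ℝ, t ≤ 0 → M0 * t ≤ Φ (u + t) - Φ u ∧ Φ (u + t) - Φ u ≤ m0 * t := by
    intro u t ht
    have h := hmvt (u + t) u (by linarith)
    have he : u - (u + t) = -t := by ring
    rw [he] at h
    constructor <;> nlinarith [h.1, h.2]
  have habs : ∀ u t : ℝ, |Φ (u + t) - Φ u| ≤ M0 * |t| := by
    intro u t
    rcases le_or_gt 0 t with ht | ht
    · rw [abs_of_nonneg ht]
      have h := hincr u t ht
      rw [abs_le]
      constructor <;> nlinarith [h.1, h.2, mul_nonneg hm0pos.le ht]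
    · rw [abs_of_neg ht]
      have h := hdecr u t ht.le
      rw [abs_le]
      constructor <;> nlinarith [h.1, h.2, mul_nonpos_of_nonneg_of_nonpos hm0pos.le ht.le]
  -- Lipschitz bound for Ψ
  have hΨlip : ∀ a b : ℝ, |Ψ a - Ψ b| ≤ |a - b| / m0 := by
    have key : ∀ a b : ℝ, b ≤ a → Ψ a - Ψ b ≤ (a - b) / m0 ∧ 0 ≤ Ψ a - Ψ b := by
      intro a b hba
      have hmono' : Ψ b ≤ Ψ a := hΨmono hba
      have h := (hmvt (Ψ b) (Ψ a) hmono').1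
      rw [hΦΨ, hΦΨ] at h
      constructor
      · rw [le_div_iff₀ hm0pos]
        nlinarith
      · linarith
    intro a b
    rcases le_or_gt b a with hba | hab
    · obtain ⟨h1, h2⟩ := key a b hba
      rw [abs_of_nonneg h2, abs_of_nonneg (by linarith : (0:ℝ) ≤ a - b)]
      exact h1
    · obtain ⟨h1, h2⟩ := key b a hab.le
      rw [abs_sub_comm, abs_sub_comm a b, abs_of_nonneg h2,
        abs_of_nonneg (by linarith : (0:ℝ) ≤ b - a)]
      exact h1
  -- conjugated inverse relation
  have hΨθ : ∀ y, Ψ (y + θ) = F (Ψ y) := by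
    intro y
    apply hΦbij.1
    rw [hΦΨ, hΦconj, hΦΨ]
  -- the conjugated family of circle maps
  have hgmono : ∀ t : ℝ, Monotone fun y => Φ (Ψ (y + θ) + t) := by
    intro t a b hab
    exact hΦmono.monotone (add_le_add (hΨmono (add_le_add hab le_rfl)) (le_refl t))
  have hgper : ∀ t y : ℝ, Φ (Ψ ((y + 1) + θ) + t) = Φ (Ψ (y + θ) + t) + 1 := by
    intro t y
    have h1 : (y + 1) + θ = (y + θ) + 1 := by ring
    rw [h1, hΨper]
    have h2 : Ψ (y + θ) + 1 + t = (Ψ (y + θ) + t) + 1 := by ring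
    rw [h2, hΦper]
  set g : ℝ → CircleDeg1Lift := fun t =>
    ⟨⟨fun y => Φ (Ψ (y + θ) + t), hgmono t⟩, hgper t⟩ with hgdef
  have hgcoe : ∀ t y, g t y = Φ (Ψ (y + θ) + t) := fun t y => rfl
  have hg0 : ∀ y, g 0 y = y + θ := by
    intro y
    rw [hgcoe, add_zero, hΦΨ]
  -- the original family
  have hfmono : ∀ t : ℝ, Monotone fun x => F x + t := by
    intro t a b hab
    exact add_le_add (hFmono.monotone hab) (le_refl t)
  have hfper : ∀ t x : ℝ, F (x + 1) + t = (F x + t) + 1 := by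
    intro t x
    rw [hFper]; ring
  set f : ℝ → CircleDeg1Lift := fun t =>
    ⟨⟨fun x => F x + t, hfmono t⟩, hfper t⟩ with hfdef
  have hτf : ∀ t, (f t).translationNumber = T t := by
    intro t
    apply CircleDeg1Lift.translationNumber_eq_of_tendsto₀
    have := hT t 0
    simp only [sub_zero] at this
    exact this
  -- Φ as a circle lift, semiconjugacy
  set Φl : CircleDeg1Lift := ⟨⟨Φ, hΦmono.monotone⟩, hΦper⟩ with hΦldef
  have hsemi : ∀ t, SemiconjBy Φl (f t) (g t) := by
    intro t
    unfold SemiconjBy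
    ext x
    show Φ (F x + t) = Φ (Ψ (Φ x + θ) + t)
    rw [← hΦconj x, hΨΦ]
  have hτg : ∀ t, (g t).translationNumber = T t := by
    intro t
    rw [← CircleDeg1Lift.translationNumber_eq_of_semiconjBy (hsemi t)]
    exact hτf t
  -- sandwich bounds for T
  have hTlow : ∀ t : ℝ, 0 ≤ t → θ + m0 * t ≤ T t := by
    intro t ht
    rw [← hτg t]
    apply CircleDeg1Lift.le_translationNumber_of_add_le
    intro y
    have h := (hincr (Ψ (y + θ)) t ht).1
    rw [hΦΨ] at h
    rw [hgcoe]
    linarith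
  have hThigh : ∀ t : ℝ, 0 ≤ t → T t ≤ θ + M0 * t := by
    intro t ht
    rw [← hτg t]
    apply CircleDeg1Lift.translationNumber_le_of_le_add
    intro y
    have h := (hincr (Ψ (y + θ)) t ht).2
    rw [hΦΨ] at h
    rw [hgcoe]
    linarith
  have hTlow' : ∀ t : ℝ, t ≤ 0 → θ + M0 * t ≤ T t := by
    intro t ht
    rw [← hτg t]
    apply CircleDeg1Lift.le_translationNumber_of_add_le
    intro y
    have h := (hdecr (Ψ (y + θ)) t ht).1
    rw [hΦΨ] at h
    rw [hgcoe]
    linarith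
  have hThigh' : ∀ t : ℝ, t ≤ 0 → T t ≤ θ + m0 * t := by
    intro t ht
    rw [← hτg t]
    apply CircleDeg1Lift.translationNumber_le_of_le_add
    intro y
    have h := (hdecr (Ψ (y + θ)) t ht).2
    rw [hΦΨ] at h
    rw [hgcoe]
    linarith
  have habslow : ∀ t : ℝ, m0 * |t| ≤ |T t - θ| := by
    intro t
    rcases le_or_gt 0 t with ht | ht
    · have h := hTlow t ht
      rw [abs_of_nonneg ht, abs_of_nonneg (by linarith [mul_nonneg hm0pos.le ht])]
      linarith
    · have h := hThigh' t ht.le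
      rw [abs_of_neg ht, abs_of_nonpos (by nlinarith), ]
      nlinarith
  refine ⟨m0, hm0pos, habslow, ?_⟩
  -- the derivative function along the rotation
  set ψ : ℝ → ℝ := fun y => deriv Φ (Ψ (y + θ)) with hψdef
  have hψcont : Continuous ψ :=
    hcontd.comp (hΨcont.comp (continuous_id.add continuous_const))
  have hψper : ∀ y, ψ (y + 1) = ψ y := by
    intro y
    show deriv Φ (Ψ ((y + 1) + θ)) = deriv Φ (Ψ (y + θ))
    have h1 : (y + 1) + θ = (y + θ) + 1 := by ring
    rw [h1, hΨper, hperd]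
  have hψm : ∀ y, m0 ≤ ψ y := fun y => hm _
  have hψM : ∀ y, ψ y ≤ M0 := fun y => hM _
  obtain ⟨c, hc⟩ := equidistribution hirr ψ hψcont hψper
  have hcm : m0 ≤ c := by
    by_contra hlt
    push_neg at hlt
    obtain ⟨q, hqpos, hq⟩ := hc ((m0 - c) / 2) (by linarith)
    have hqR : (0:ℝ) < q := by exact_mod_cast hqpos
    have h := hq 0
    have hsum : (q : ℝ) * m0 ≤ ∑ k ∈ Finset.range q, ψ (0 + k * θ) := by
      calc (q : ℝ) * m0 = ∑ _k ∈ Finset.range q, m0 := by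
            rw [Finset.sum_const, Finset.card_range, nsmul_eq_mul]
        _ ≤ _ := Finset.sum_le_sum fun k _ => hψm _
    rw [abs_le] at h
    nlinarith [h.1, h.2]
  intro ε hε
  refine ⟨c, hcm, ?_⟩
  set ε' : ℝ := ε / 4 with hε'def
  have hε'pos : 0 < ε' := by positivity
  obtain ⟨δ₁, hδ₁pos, hδ₁⟩ := unifcont_of_periodic hcontd hperd ε' hε'pos
  obtain ⟨q, hq1, hq⟩ := hc ε' hε'pos
  have hqR : (0:ℝ) < q := by exact_mod_cast hq1
  set δ : ℝ := min δ₁ (δ₁ * m0 / (q * M0)) with hδdef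
  have hδpos : 0 < δ := lt_min hδ₁pos (by positivity)
  refine ⟨δ, hδpos, fun t ht => ?_⟩
  have htδ₁ : |t| ≤ δ₁ := ht.trans (min_le_left _ _)
  have htδ2 : |t| ≤ δ₁ * m0 / (q * M0) := ht.trans (min_le_right _ _)
  -- one-step estimate
  have hstep1 : ∀ z : ℝ, |g t z - (z + θ) - t * ψ z| ≤ ε' * |t| := by
    intro z
    set u : ℝ := Ψ (z + θ) with hudef
    have hψz : ψ z = deriv Φ u := rfl
    have hΦu : Φ u = z + θ := hΦΨ _
    set f0 : ℝ → ℝ := fun s => Φ s - deriv Φ u * s with hf0def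
    have hf0diff : ∀ x ∈ Icc (u - δ₁) (u + δ₁), DifferentiableAt ℝ f0 x := by
      intro x _
      exact (hdiff x).sub ((differentiable_id.const_mul (deriv Φ u)) x)
    have hf0deriv : ∀ x, deriv f0 x = deriv Φ x - deriv Φ u := by
      intro x
      have hg : HasDerivAt (fun s : ℝ => deriv Φ u * s) (deriv Φ u) x := by
        simpa using (hasDerivAt_id x).const_mul (deriv Φ u)
      exact ((hdiff x).hasDerivAt.sub hg).deriv
    have hbound : ∀ x ∈ Icc (u - δ₁) (u + δ₁), ‖deriv f0 x‖ ≤ ε' := by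
      intro x hx
      rw [hf0deriv, Real.norm_eq_abs]
      apply hδ₁
      obtain ⟨h1, h2⟩ := hx
      rw [abs_le]
      constructor <;> linarith
    have hu1 : u ∈ Icc (u - δ₁) (u + δ₁) := by
      constructor <;> simp <;> linarith
    have hu2 : u + t ∈ Icc (u - δ₁) (u + δ₁) := by
      obtain ⟨h1, h2⟩ := abs_le.mp htδ₁
      constructor <;> simp <;> linarith
    have := Convex.norm_image_sub_le_of_norm_deriv_le hf0diff hbound
      (convex_Icc _ _) hu1 hu2
    rw [Real.norm_eq_abs, Real.norm_eq_abs] at this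
    have heq1 : f0 (u + t) - f0 u = Φ (u + t) - Φ u - deriv Φ u * t := by
      rw [hf0def]; ring
    have heq2 : u + t - u = t := by ring
    rw [heq1, heq2] at this
    have heq3 : g t z - (z + θ) - t * ψ z = Φ (u + t) - Φ u - deriv Φ u * t := by
      rw [hgcoe, hψz, hΦu, ← hudef]
      ring_nf
    rw [heq3]
    exact this
  -- step bound
  have hstep0 : ∀ z : ℝ, |g t z - (z + θ)| ≤ M0 * |t| := by
    intro z
    have h := habs (Ψ (z + θ)) t
    rw [hΦΨ] at h
    rw [hgcoe]
    exact h
  -- orbit drift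
  have hdrift : ∀ y : ℝ, ∀ k : ℕ, |(⇑(g t))^[k] y - (y + k * θ)| ≤ k * (M0 * |t|) := by
    intro y k
    induction k with
    | zero => simp
    | succ k ih =>
        rw [Function.iterate_succ_apply']
        set w : ℝ := (⇑(g t))^[k] y with hwdef
        have h1 : |g t w - (w + θ)| ≤ M0 * |t| := hstep0 w
        have h2 : g t w - (y + (k + 1 : ℕ) * θ) = (g t w - (w + θ)) + (w - (y + k * θ)) := by
          push_cast
          ring
        rw [h2]
        calc |(g t w - (w + θ)) + (w - (y + k * θ))|
            ≤ |g t w - (w + θ)| + |w - (y + k * θ)| := abs_add_le _ _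
          _ ≤ M0 * |t| + k * (M0 * |t|) := add_le_add h1 ih
          _ = (k + 1 : ℕ) * (M0 * |t|) := by push_cast; ring
  -- telescoping identity
  have htel : ∀ y : ℝ, ∀ n : ℕ,
      (⇑(g t))^[n] y - y - n * θ - t * (∑ k ∈ Finset.range n, ψ (y + k * θ))
        = ∑ k ∈ Finset.range n,
            (g t ((⇑(g t))^[k] y) - (⇑(g t))^[k] y - θ - t * ψ (y + k * θ)) := by
    intro y n
    induction n with
    | zero => simp
    | succ n ih =>
        rw [Finset.sum_range_succ, Finset.sum_range_succ, Function.iterate_succ_apply']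
        push_cast
        push_cast at ih
        linarith [ih]
  -- per-term bound
  have hterm : ∀ y : ℝ, ∀ k : ℕ, k < q →
      |g t ((⇑(g t))^[k] y) - (⇑(g t))^[k] y - θ - t * ψ (y + k * θ)| ≤ 2 * ε' * |t| := by
    intro y k hk
    set w : ℝ := (⇑(g t))^[k] y with hwdef
    have h1 : |g t w - (w + θ) - t * ψ w| ≤ ε' * |t| := hstep1 w
    have h2 : |ψ w - ψ (y + k * θ)| ≤ ε' := by
      rw [hψdef]
      apply hδ₁
      have h3 : |Ψ (w + θ) - Ψ ((y + k * θ) + θ)| ≤ |w - (y + k * θ)| / m0 := by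
        have := hΨlip (w + θ) ((y + k * θ) + θ)
        have he : w + θ - ((y + k * θ) + θ) = w - (y + k * θ) := by ring
        rwa [he] at this
      refine h3.trans ?_
      rw [div_le_iff₀ hm0pos]
      have h4 : |w - (y + k * θ)| ≤ k * (M0 * |t|) := hdrift y k
      refine h4.trans ?_
      have h5 : (k : ℝ) ≤ q := by
        have : (k:ℝ) < q := by exact_mod_cast hk
        linarith
      have h6 : (k : ℝ) * (M0 * |t|) ≤ q * (M0 * (δ₁ * m0 / (q * M0))) := by
        have habs0 : (0:ℝ) ≤ |t| := abs_nonneg t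
        have hM0' : (0:ℝ) ≤ M0 := hMpos.le
        gcongr
      refine h6.trans ?_
      have h7 : (q:ℝ) * (M0 * (δ₁ * m0 / ((q:ℝ) * M0))) = δ₁ * m0 := by
        field_simp
      rw [h7]
    have h7 : g t w - w - θ - t * ψ (y + k * θ)
        = (g t w - (w + θ) - t * ψ w) + t * (ψ w - ψ (y + k * θ)) := by ring
    rw [h7]
    calc |(g t w - (w + θ) - t * ψ w) + t * (ψ w - ψ (y + k * θ))|
        ≤ |g t w - (w + θ) - t * ψ w| + |t * (ψ w - ψ (y + k * θ))| := abs_add_le _ _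
      _ ≤ ε' * |t| + |t| * ε' := by
          refine add_le_add h1 ?_
          rw [abs_mul]
          exact mul_le_mul_of_nonneg_left h2 (abs_nonneg t)
      _ = 2 * ε' * |t| := by ring
  -- total q-step estimate
  have htotal : ∀ y : ℝ, |(⇑(g t))^[q] y - y - (q * θ + t * (q * c))| ≤ q * (3 * ε') * |t| := by
    intro y
    have hid : (⇑(g t))^[q] y - y - (q * θ + t * (q * c))
        = (∑ k ∈ Finset.range q,
            (g t ((⇑(g t))^[k] y) - (⇑(g t))^[k] y - θ - t * ψ (y + k * θ)))
          + t * ((∑ k ∈ Finset.range q, ψ (y + k * θ)) - q * c) := by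
      have := htel y q
      linarith [this]
    rw [hid]
    calc |_ + _| ≤ |∑ k ∈ Finset.range q,
            (g t ((⇑(g t))^[k] y) - (⇑(g t))^[k] y - θ - t * ψ (y + k * θ))|
          + |t * ((∑ k ∈ Finset.range q, ψ (y + k * θ)) - q * c)| := abs_add_le _ _
      _ ≤ (q : ℝ) * (2 * ε' * |t|) + |t| * ((q : ℝ) * ε') := by
          refine add_le_add ?_ ?_
          · refine (Finset.abs_sum_le_sum_abs _ _).trans ?_
            refine (Finset.sum_le_sum fun k hk => hterm y k (Finset.mem_range.mp hk)).trans ?_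
            rw [Finset.sum_const, Finset.card_range, nsmul_eq_mul]
          · rw [abs_mul]
            exact mul_le_mul_of_nonneg_left (hq y) (abs_nonneg t)
      _ = q * (3 * ε') * |t| := by ring
  -- sandwich for the q-th power
  have hpow : ∀ y, ((g t) ^ q) y = (⇑(g t))^[q] y := by
    intro y
    rw [CircleDeg1Lift.coe_pow]
  have hτpow : ((g t) ^ q).translationNumber = q * T t := by
    rw [CircleDeg1Lift.translationNumber_pow, hτg]
  have hlow : q * θ + t * (q * c) - q * (3 * ε') * |t| ≤ q * T t := by
    rw [← hτpow]
    apply CircleDeg1Lift.le_translationNumber_of_add_le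
    intro y
    rw [hpow]
    have h := (abs_le.mp (htotal y)).1
    linarith
  have hhigh : q * T t ≤ q * θ + t * (q * c) + q * (3 * ε') * |t| := by
    rw [← hτpow]
    apply CircleDeg1Lift.translationNumber_le_of_le_add
    intro y
    rw [hpow]
    have h := (abs_le.mp (htotal y)).2
    linarith
  have hfinal : |T t - θ - c * t| ≤ 3 * ε' * |t| := by
    rw [abs_le]
    constructor
    · have h2 : (q:ℝ) * -(3 * ε' * |t|) ≤ (q:ℝ) * (T t - θ - c * t) := by
        ring_nf
        ring_nf at hlow
        linarith
      exact le_of_mul_le_mul_left h2 hqR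
    · have h2 : (q:ℝ) * (T t - θ - c * t) ≤ (q:ℝ) * (3 * ε' * |t|) := by
        ring_nf
        ring_nf at hhigh
        linarith
      exact le_of_mul_le_mul_left h2 hqR
  refine hfinal.trans ?_
  have : 3 * ε' ≤ ε := by rw [hε'def]; linarith
  exact mul_le_mul_of_nonneg_right this (abs_nonneg t)

end HermanLen

open HermanLen in
/-- Corollary of Herman's theorem: if the linearizing map `Φ_F` is a `C¹`
diffeomorphism of `ℝ`, then the lengths `ℓ_{p_n/q_n}` of the parameter intervals
`I(p_n/q_n)` satisfy `ℓ_{p_n/q_n} = o(θ - p_n/q_n) = O(1/q_n²)`. -/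
theorem length_interval_littleO_of_C1_linearization
    (F : ℝ → ℝ)
    (hFanal : ∀ x : ℝ, AnalyticAt ℝ F x)
    (hFmono : StrictMono F)
    (hFbij : Function.Bijective F)
    (hFderiv : ∀ x : ℝ, 0 < deriv F x)
    (hFper : ∀ x : ℝ, F (x + 1) = F x + 1)
    -- translation numbers of the translated family `F_t = F + t`
    (T : ℝ → ℝ)
    (hT : ∀ t x : ℝ, Tendsto (fun n : ℕ => ((fun y => F y + t)^[n] x - x) / n)
      atTop (𝓝 (T t)))
    (θ : ℝ) (hθ : T 0 = θ) (hirr : Irrational θ)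
    -- the linearizing map `Φ_F`, obtained as the limit of `(1/N) ∑_{k<N} (F^{∘k} - kθ)`
    (Φ : ℝ → ℝ)
    (hΦlim : ∀ x : ℝ, Tendsto
      (fun N : ℕ => (1 / (N : ℝ)) * ∑ k ∈ Finset.range N, (F^[k] x - (k : ℝ) * θ))
      atTop (𝓝 (Φ x)))
    (hΦmono : StrictMono Φ)
    (hΦper : ∀ x : ℝ, Φ (x + 1) = Φ x + 1)
    (hΦconj : ∀ x : ℝ, Φ (F x) = Φ x + θ)
    -- `Φ_F` is a `C¹` diffeomorphism of `ℝ`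
    (hΦC1 : ContDiff ℝ 1 Φ)
    (hΦbij : Function.Bijective Φ)
    (hΦderiv : ∀ x : ℝ, deriv Φ x ≠ 0)
    -- continued fraction convergents `p_n/q_n` of `θ`
    (pn : ℕ → ℤ) (qn : ℕ → ℕ)
    (hqpos : ∀ n, 0 < qn n)
    (hqtend : Tendsto qn atTop atTop)
    (hcop : ∀ n, Nat.Coprime (pn n).natAbs (qn n))
    (hconv : ∀ n, |θ - (pn n : ℝ) / (qn n : ℝ)| ≤ 1 / (qn n : ℝ) ^ 2)
    -- the intervals `I(p_n/q_n)` and their lengths `ℓ_{p_n/q_n} = tmax n - tmin n`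
    (tmin tmax : ℕ → ℝ) (hle : ∀ n, tmin n ≤ tmax n)
    (hI : ∀ n, {t : ℝ | T t = (pn n : ℝ) / (qn n : ℝ)} = Set.Icc (tmin n) (tmax n)) :
    (fun n => tmax n - tmin n) =o[atTop] (fun n => θ - (pn n : ℝ) / (qn n : ℝ))
    ∧ (fun n => tmax n - tmin n) =O[atTop] (fun n => 1 / (qn n : ℝ) ^ 2) := by
  obtain ⟨m0, hm0pos, habslow, hder⟩ :=
    key_dyn F hFmono hFper T hT θ hirr Φ hΦmono hΦper hΦconj hΦC1 hΦbij hΦderiv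
  set e : ℕ → ℝ := fun n => θ - (pn n : ℝ) / (qn n : ℝ) with hedef
  have hTmin : ∀ n, T (tmin n) = (pn n : ℝ) / (qn n : ℝ) := by
    intro n
    have h1 : tmin n ∈ Set.Icc (tmin n) (tmax n) := Set.left_mem_Icc.mpr (hle n)
    rw [← hI n] at h1
    exact h1
  have hTmax : ∀ n, T (tmax n) = (pn n : ℝ) / (qn n : ℝ) := by
    intro n
    have h1 : tmax n ∈ Set.Icc (tmin n) (tmax n) := Set.right_mem_Icc.mpr (hle n)
    rw [← hI n] at h1
    exact h1
  have hbnd : ∀ n, |tmin n| ≤ |e n| / m0 ∧ |tmax n| ≤ |e n| / m0 := by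
    intro n
    constructor
    · have h := habslow (tmin n)
      rw [hTmin n] at h
      have h2 : |(pn n : ℝ) / (qn n : ℝ) - θ| = |e n| := by
        rw [hedef, abs_sub_comm]
      rw [h2] at h
      rw [le_div_iff₀ hm0pos]
      linarith
    · have h := habslow (tmax n)
      rw [hTmax n] at h
      have h2 : |(pn n : ℝ) / (qn n : ℝ) - θ| = |e n| := by
        rw [hedef, abs_sub_comm]
      rw [h2] at h
      rw [le_div_iff₀ hm0pos]
      linarith
  have hq2tend : Tendsto (fun n => 1 / ((qn n : ℝ)) ^ 2) atTop (𝓝 0) := by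
    have h1 : Tendsto (fun n => ((qn n : ℝ))) atTop atTop :=
      tendsto_natCast_atTop_atTop.comp hqtend
    have h2 : Tendsto (fun n => ((qn n : ℝ)) ^ 2) atTop atTop := by
      have hp : Tendsto (fun x : ℝ => x ^ 2) atTop atTop :=
        tendsto_pow_atTop (by norm_num)
      exact hp.comp h1
    simpa [one_div, Pi.inv_def] using h2.inv_tendsto_atTop
  have htend0 : Tendsto (fun n => |e n|) atTop (𝓝 0) := by
    apply squeeze_zero (fun n => abs_nonneg _) (fun n => hconv n) hq2tend
  have hlittle : (fun n => tmax n - tmin n) =o[atTop] e := by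
    rw [Asymptotics.isLittleO_iff]
    intro C hC
    set ε : ℝ := C * m0 ^ 2 / 2 with hεdef
    have hεpos : 0 < ε := by positivity
    obtain ⟨c, hcm, δ, hδpos, hder'⟩ := hder ε hεpos
    have hcpos : 0 < c := lt_of_lt_of_le hm0pos hcm
    have hev : ∀ᶠ n in atTop, |e n| < δ * m0 :=
      htend0.eventually (gt_mem_nhds (by positivity))
    filter_upwards [hev] with n hn
    have hb := hbnd n
    have hs1 : |tmin n| ≤ δ := by
      refine hb.1.trans ?_
      rw [div_le_iff₀ hm0pos]
      nlinarith
    have hs2 : |tmax n| ≤ δ := by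
      refine hb.2.trans ?_
      rw [div_le_iff₀ hm0pos]
      nlinarith
    have hd1 := hder' (tmin n) hs1
    have hd2 := hder' (tmax n) hs2
    rw [hTmin n] at hd1
    rw [hTmax n] at hd2
    have heq1 : (pn n : ℝ) / (qn n : ℝ) - θ = -(e n) := by rw [hedef]; ring
    rw [heq1] at hd1 hd2
    -- subtract
    have hsub : |c * (tmax n - tmin n)| ≤ ε * |tmin n| + ε * |tmax n| := by
      have hid : c * (tmax n - tmin n)
          = (-(e n) - c * tmin n) - (-(e n) - c * tmax n) := by ring
      rw [hid]
      calc |(-(e n) - c * tmin n) - (-(e n) - c * tmax n)|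
          ≤ |(-(e n) - c * tmin n)| + |(-(e n) - c * tmax n)| := abs_sub _ _
        _ ≤ ε * |tmin n| + ε * |tmax n| := add_le_add hd1 hd2
    have hnn : 0 ≤ tmax n - tmin n := by linarith [hle n]
    have h3 : c * (tmax n - tmin n) ≤ 2 * ε * (|e n| / m0) := by
      have h4 : c * (tmax n - tmin n) ≤ |c * (tmax n - tmin n)| := le_abs_self _
      have h5 : ε * |tmin n| + ε * |tmax n| ≤ ε * (|e n| / m0) + ε * (|e n| / m0) := by
        gcongr
        · exact hb.1
        · exact hb.2
      nlinarith
    have h6 : m0 * (tmax n - tmin n) ≤ c * (tmax n - tmin n) :=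
      mul_le_mul_of_nonneg_right hcm hnn
    rw [Real.norm_eq_abs, Real.norm_eq_abs, abs_of_nonneg hnn]
    have hfin : tmax n - tmin n ≤ C * |e n| := by
      rw [hεdef] at h3
      have h7 : 2 * (C * m0 ^ 2 / 2) * (|e n| / m0) = C * m0 * |e n| := by
        field_simp
      rw [h7] at h3
      nlinarith [h3, h6, hm0pos, abs_nonneg (e n)]
    exact hfin
  constructor
  · exact hlittle
  · refine hlittle.isBigO.trans ?_
    apply Asymptotics.isBigO_of_le
    intro n
    rw [Real.norm_eq_abs, Real.norm_eq_abs]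
    refine (hconv n).trans ?_
    exact le_abs_self _
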